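/- Let ρ be a probability distribution on a finite set Ω with |Ω| = k ≥ 2, Shannon entropy h := H(ρ) > 0, and q := max_{x∈Ω} ρ(x) ≥ 1/2. Then 1 − q ≥ h / (9·log(9k·log(9k)/h)). -/

import Mathlib

open Finset

noncomputable section

/-- Shannon entropy (in nats) of a finitely supported distribution, with
the convention `0 · log 0 = 0` (note `Real.log 0 = 0`). -/
def shannonEntropy {Ω : Type*} [Fintype Ω] (ρ : Ω → ℝ) : ℝ :=
  ∑ x, -(ρ x * Real.log (ρ x))

private lemma log_le_div_e {x : ℝ} (hx : 0 < x) : Real.log x ≤ x / Real.exp 1 := by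
  have h := Real.log_le_sub_one_of_pos (show 0 < x / Real.exp 1 by positivity)
  rw [Real.log_div hx.ne' (Real.exp_ne_zero 1), Real.log_exp] at h
  linarith

lemma neg_mul_log_le {p c : ℝ} (hp : 0 ≤ p) (hc : 0 < c) :
    -(p * Real.log p) ≤ c / Real.exp 1 - p * Real.log c := by
  rcases hp.eq_or_lt with h | h
  · rw [← h]; simp; positivity
  · have h1 : Real.log (c / p) ≤ (c / p) / Real.exp 1 := log_le_div_e (by positivity)
    rw [Real.log_div hc.ne' h.ne'] at h1
    have h2 := mul_le_mul_of_nonneg_left h1 h.le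
    have h3 : p * (c / p / Real.exp 1) = c / Real.exp 1 := by field_simp
    nlinarith

set_option maxHeartbeats 1000000 in
/-- If `|Ω| = k ≥ 2`, `h = H(ρ) > 0` and `q = max_x ρ(x) ≥ 1/2`, then
`1 − q ≥ h / (9 · log(9k·log(9k)/h))`. -/
theorem stmt_14 {Ω : Type*} [Fintype Ω]
    (hk : 2 ≤ Fintype.card Ω)
    (ρ : Ω → ℝ) (hρ0 : ∀ x, 0 ≤ ρ x) (hρ1 : ∑ x, ρ x = 1)
    (h : ℝ) (hent : shannonEntropy ρ = h) (hh0 : 0 < h)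
    (q : ℝ) (hqmax : ∀ x, ρ x ≤ q) (hqmem : ∃ x, ρ x = q)
    (hq : 1 / 2 ≤ q) :
    h / (9 * Real.log (9 * (Fintype.card Ω : ℝ) *
        Real.log (9 * (Fintype.card Ω : ℝ)) / h)) ≤ 1 - q := by
  classical
  have he : (0:ℝ) < Real.exp 1 := Real.exp_pos 1
  have he1 : Real.exp 1 < 3 := by
    have := Real.exp_one_lt_d9; linarith
  have he2 : (2:ℝ) ≤ Real.exp 1 := by
    have := Real.add_one_le_exp (1:ℝ); linarith
  have hinv : 1 / Real.exp 1 ≤ 1 := by rw [div_le_one he]; linarith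
  set K : ℝ := (Fintype.card Ω : ℝ) with hKdef
  clear_value K
  have hK2 : (2:ℝ) ≤ K := by rw [hKdef]; exact_mod_cast hk
  have hK0 : (0:ℝ) < K := by linarith
  obtain ⟨x₀, hx₀⟩ := hqmem
  have hq1 : q ≤ 1 := by
    rw [← hρ1, ← hx₀]
    exact Finset.single_le_sum (fun x _ => hρ0 x) (mem_univ x₀)
  have hq0 : (0:ℝ) < q := by linarith
  set t := 1 - q with htdef
  clear_value t
  have ht0 : 0 ≤ t := by rw [htdef]; linarith
  have hsum_erase : ∑ x ∈ univ.erase x₀, ρ x = t := by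
    have h1 := Finset.add_sum_erase univ ρ (mem_univ x₀)
    rw [hρ1, hx₀] at h1
    rw [htdef]; linarith
  have hent_split : h = -(q * Real.log q) + ∑ x ∈ univ.erase x₀, -(ρ x * Real.log (ρ x)) := by
    rw [← hent, shannonEntropy,
      ← Finset.add_sum_erase univ (fun x => -(ρ x * Real.log (ρ x))) (mem_univ x₀), hx₀]
  -- t > 0
  have htpos : 0 < t := by
    rcases ht0.eq_or_lt with h0 | h0
    · exfalso
      have hz : ∀ x ∈ univ.erase x₀, ρ x = 0 :=
        (Finset.sum_eq_zero_iff_of_nonneg (fun x _ => hρ0 x)).mp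
          (by rw [hsum_erase, ← h0])
      have hq1' : q = 1 := by
        have : t = 0 := h0.symm
        rw [htdef] at this; linarith
      have : h = 0 := by
        rw [hent_split, hq1', Real.log_one]
        rw [Finset.sum_congr rfl (fun x hx => by rw [hz x hx])]
        simp
      linarith
    · exact h0
  -- entropy upper bound: h ≤ log K + 1/e
  have hhub : h ≤ Real.log K + 1 / Real.exp 1 := by
    have hb : ∀ x ∈ (univ : Finset Ω),
        -(ρ x * Real.log (ρ x)) ≤ (1/K) / Real.exp 1 - ρ x * Real.log (1/K) :=
      fun x _ => neg_mul_log_le (hρ0 x) (by positivity)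
    have hs := Finset.sum_le_sum hb
    rw [← hent, shannonEntropy]
    rw [Finset.sum_sub_distrib, Finset.sum_const, ← Finset.sum_mul, hρ1] at hs
    rw [Finset.card_univ, nsmul_eq_mul, ← hKdef] at hs
    have heq : K * (1 / K / Real.exp 1) = 1 / Real.exp 1 := by field_simp
    rw [Real.log_div one_ne_zero hK0.ne', Real.log_one] at hs
    linarith
  -- key: h ≤ 2t + t log K - t log t
  have hkey : h ≤ 2 * t + t * Real.log K - t * Real.log t := by
    have h1 : -(q * Real.log q) ≤ t := by
      have hl := Real.log_le_sub_one_of_pos (show 0 < 1/q by positivity)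
      rw [Real.log_div one_ne_zero hq0.ne', Real.log_one] at hl
      have h2 := mul_le_mul_of_nonneg_left (show -Real.log q ≤ 1/q - 1 by linarith) hq0.le
      have h3 : q * (1/q - 1) = 1 - q := by field_simp
      have h4 : q * -Real.log q = -(q * Real.log q) := by ring
      rw [htdef]; linarith
    have h2 : ∑ x ∈ univ.erase x₀, -(ρ x * Real.log (ρ x))
        ≤ t / Real.exp 1 - t * (Real.log t - Real.log K) := by
      have hb : ∀ x ∈ univ.erase x₀,
          -(ρ x * Real.log (ρ x)) ≤ (t/K) / Real.exp 1 - ρ x * Real.log (t/K) :=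
        fun x _ => neg_mul_log_le (hρ0 x) (by positivity)
      have hs := Finset.sum_le_sum hb
      rw [Finset.sum_sub_distrib, Finset.sum_const, ← Finset.sum_mul, hsum_erase] at hs
      rw [nsmul_eq_mul, Real.log_div htpos.ne' hK0.ne'] at hs
      have hcard_le : ((univ.erase x₀).card : ℝ) ≤ K := by
        rw [hKdef]
        exact_mod_cast (Finset.card_erase_le (a := x₀) (s := (univ : Finset Ω))).trans
          (le_of_eq Finset.card_univ)
      have hconst : ((univ.erase x₀).card : ℝ) * (t/K / Real.exp 1) ≤ t / Real.exp 1 := by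
        have hpos : 0 ≤ t/K / Real.exp 1 := by positivity
        have hm := mul_le_mul_of_nonneg_right hcard_le hpos
        have heq : K * (t/K / Real.exp 1) = t / Real.exp 1 := by field_simp
        linarith
      linarith
    have hexp : t * (Real.log t - Real.log K) = t * Real.log t - t * Real.log K := by ring
    have hte : t / Real.exp 1 ≤ t := by
      rw [div_le_iff₀ he]; nlinarith
    rw [hent_split]; linarith
  -- arithmetic setup
  set L0 : ℝ := Real.log (9 * K) with hL0def
  clear_value L0
  have hL0 : 1 < L0 := by
    rw [hL0def, Real.lt_log_iff_exp_lt (by positivity)]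
    linarith
  have hL0pos : 0 < L0 := by linarith
  have hlogK_le : Real.log K ≤ K - 1 := by
    have := Real.log_le_sub_one_of_pos hK0; linarith
  have hhL0 : h ≤ L0 := by
    have h9 : Real.log 9 + Real.log K = L0 := by
      rw [hL0def, Real.log_mul (by norm_num) hK0.ne']
    have h9' : (1:ℝ) ≤ Real.log 9 := by
      rw [Real.le_log_iff_exp_le (by norm_num)]; linarith
    linarith
  set L : ℝ := Real.log (9 * K * L0 / h) with hLdef
  clear_value L
  have hLge : L0 ≤ L := by
    rw [hLdef, hL0def]
    apply Real.log_le_log (by positivity)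
    rw [le_div_iff₀ hh0]
    nlinarith
  have hL1 : 1 < L := lt_of_lt_of_le hL0 hLge
  have hLpos : 0 < L := by linarith
  show h / (9 * L) ≤ t
  by_contra hcon
  push_neg at hcon
  set t₀ : ℝ := h / (9 * L) with ht₀def
  clear_value t₀
  have ht₀pos : 0 < t₀ := by rw [ht₀def]; positivity
  have ht₀h : t₀ ≤ h := by
    rw [ht₀def]; apply div_le_self hh0.le; linarith
  have ht₀K : t₀ ≤ K := by linarith
  have hlogt₀ : Real.log t₀ ≤ Real.log K := Real.log_le_log ht₀pos ht₀K
  -- tangent line trick at t₀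
  have htan : t * Real.log t₀ - t * Real.log t ≤ t₀ - t := by
    have hl := Real.log_le_sub_one_of_pos (show 0 < t₀ / t by positivity)
    rw [Real.log_div ht₀pos.ne' htpos.ne'] at hl
    have h2 := mul_le_mul_of_nonneg_left hl htpos.le
    have h3 : t * (t₀/t - 1) = t₀ - t := by field_simp
    have h4 : t * (Real.log t₀ - Real.log t) = t * Real.log t₀ - t * Real.log t := by ring
    linarith
  have hchain : h ≤ t₀ * (2 + Real.log K - Real.log t₀) := by
    have hcoef : 0 ≤ 1 + Real.log K - Real.log t₀ := by linarith
    have e1 : h ≤ t + (t * Real.log K - t * Real.log t₀) + t₀ := by linarith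
    have hmul := mul_le_mul_of_nonneg_right hcon.le hcoef
    have e2 : t * (1 + Real.log K - Real.log t₀)
        = t + (t * Real.log K - t * Real.log t₀) := by ring
    have e4 : t₀ * (2 + Real.log K - Real.log t₀)
        = t₀ * (1 + Real.log K - Real.log t₀) + t₀ := by ring
    linarith
  -- compute the coefficient
  have hlogt₀' : Real.log t₀ = Real.log h - Real.log 9 - Real.log L := by
    rw [ht₀def, Real.log_div hh0.ne' (by positivity),
      Real.log_mul (by norm_num) hLpos.ne']
    ring
  have hLeq : L = Real.log 9 + Real.log K + Real.log L0 - Real.log h := by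
    rw [hLdef, Real.log_div (by positivity) hh0.ne',
      Real.log_mul (by positivity) hL0pos.ne',
      Real.log_mul (by norm_num) hK0.ne']
  have hCval : 2 + Real.log K - Real.log t₀ = 2 + L - Real.log L0 + Real.log L := by
    rw [hlogt₀']; linarith
  have hloglog : Real.log L - Real.log L0 ≤ L - 1 := by
    have hl := Real.log_le_sub_one_of_pos (show 0 < L / L0 by positivity)
    rw [Real.log_div hLpos.ne' hL0pos.ne'] at hl
    have hLL : L / L0 ≤ L := by
      rw [div_le_iff₀ hL0pos]; nlinarith
    linarith
  have hCle : 2 + Real.log K - Real.log t₀ ≤ 1 + 2 * L := by linarith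
  have hfin : t₀ * (9 * L) = h := by
    rw [ht₀def]; field_simp
  have hlt : t₀ * (1 + 2 * L) < t₀ * (9 * L) :=
    mul_lt_mul_of_pos_left (by linarith) ht₀pos
  have hle2 : t₀ * (2 + Real.log K - Real.log t₀) ≤ t₀ * (1 + 2 * L) :=
    mul_le_mul_of_nonneg_left hCle ht₀pos.le
  linarith
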